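/- There exists a magic permutohedron: a bijection ℓ from the permutations of Fin 4 to {1, 2, ..., 24} such that for every 2-element subset T of Fin 4 the sum of ℓ over the square facet F(T) equals 50, and for every subset T of Fin 4 of size 1 or 3 the sum of ℓ over the hexagonal facet F(T) equals 75. -/
import Mathlib

def magicVal (σ : Equiv.Perm (Fin 4)) : ℕ :=
  match (σ 0).val * 100 + (σ 1).val * 10 + (σ 2).val with
  | 12 => 6
  | 13 => 7
  | 21 => 19
  | 23 => 3
  | 31 => 18
  | 32 => 22
  | 102 => 14
  | 103 => 23
  | 120 => 11
  | 123 => 10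
  | 130 => 2
  | 132 => 15
  | 201 => 4
  | 203 => 20
  | 210 => 21
  | 213 => 12
  | 230 => 1
  | 231 => 17
  | 301 => 9
  | 302 => 5
  | 310 => 16
  | 312 => 13
  | 320 => 24
  | 321 => 8
  | _ => 0

lemma magicVal_mem : ∀ σ : Equiv.Perm (Fin 4), magicVal σ ∈ Finset.Icc 1 24 := by decide

def magicFun (σ : Equiv.Perm (Fin 4)) : (Finset.Icc 1 24 : Finset ℕ) := ⟨magicVal σ, magicVal_mem σ⟩

lemma magicFun_bij : Function.Bijective magicFun := by decide

/-- The facet `F(T)` of the 3-permutohedron associated to a nonempty proper subset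
`T` of `Fin 4`: the set of permutations `σ` with `σ(T) = {0, 1, …, |T| - 1}`. -/
def permutohedronFacet (T : Finset (Fin 4)) : Finset (Equiv.Perm (Fin 4)) :=
  Finset.univ.filter fun σ =>
    T.image σ = Finset.univ.filter fun j : Fin 4 => (j : ℕ) < T.card

/-- There exists a magic permutohedron: a labeling of the vertices of the
3-permutohedron by `{1, …, 24}` whose sum on every square facet is `50` and on every
hexagonal facet is `75`. -/
theorem exists_magic_permutohedron :
    ∃ ℓ : Equiv.Perm (Fin 4) ≃ (Finset.Icc 1 24 : Finset ℕ),
      (∀ T : Finset (Fin 4), T.card = 2 →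
        ∑ σ ∈ permutohedronFacet T, (ℓ σ : ℕ) = 50) ∧
      (∀ T : Finset (Fin 4), T.card = 1 ∨ T.card = 3 →
        ∑ σ ∈ permutohedronFacet T, (ℓ σ : ℕ) = 75) := by
  refine ⟨Equiv.ofBijective magicFun magicFun_bij, ?_, ?_⟩ <;> decide
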